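/- Let N and k be positive natural numbers and let 0 ≤ δ < 0.47. Then there exist constants ρ with 0 < ρ < 1 and τ > 0, depending only on δ, such that the following holds: for every matrix A ∈ ℂ^{N×N} whose 4k-th restricted isometry constant δ_{4k} satisfies δ_{4k} ≤ δ, every x̂ ∈ ℂ^N, every β ∈ ℂ^N, and y := A x̂ + β, any sequence (x̂ⁿ)_{n≥0} of k-sparse vectors generated by the CoSaMP iteration for (A, y, k) — namely, for each n: (i) z := A* (y − A x̂ⁿ) where A* is the conjugate transpose; (ii) Ω is a set of 2k indices containing indices of 2k largest-modulus entries of z (i.e. |z_j| ≤ |z_i| for every i ∈ Ω and j ∉ Ω); (iii) R := Ω ∪ supp(x̂ⁿ); (iv) b is a vector supported on R minimizing ‖y − A b‖₂ among all vectors supported on R; (v) x̂^{n+1} is a best k-term approximation of b, obtained by keeping k largest-modulus entries of b and setting the rest to zero — satisfies, for every n ≥ 0, ‖x̂ⁿ − x̂_{h(k)}‖₂ ≤ ρⁿ·‖x̂⁰ − x̂_{h(k)}‖₂ + τ·‖A x̂_{t(k)} + β‖₂, where x̂_{h(k)} is the k-sparse vector consisting of the k largest-modulus entries of x̂ (the others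 set to zero) and x̂_{t(k)} := x̂ − x̂_{h(k)}. -/

import Mathlib

open Finset

/-- The ℓ₁ norm of a vector in ℂ^N. -/
noncomputable def l1 {N : ℕ} (v : Fin N → ℂ) : ℝ := ∑ i, ‖v i‖

/-- The Euclidean (ℓ₂) norm of a vector in ℂ^N. -/
noncomputable def l2 {N : ℕ} (v : Fin N → ℂ) : ℝ := Real.sqrt (∑ i, ‖v i‖ ^ 2)

/-- The ℓ∞ (maximum-modulus) norm of a vector in ℂ^N. -/
noncomputable def linf {N : ℕ} (v : Fin N → ℂ) : ℝ := ⨆ i, ‖v i‖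

/-- The number of nonzero entries of a vector (its "ℓ₀ norm"). -/
noncomputable def l0 {N : ℕ} (v : Fin N → ℂ) : ℕ := (Finset.univ.filter fun i => v i ≠ 0).card

/-- The best k-term approximation error in ℓ₁ norm:
    σ_k(x)₁ = inf { ‖x − z‖₁ : z is k-sparse }. -/
noncomputable def sigma1 {N : ℕ} (k : ℕ) (x : Fin N → ℂ) : ℝ :=
  sInf {t : ℝ | ∃ z : Fin N → ℂ, l0 z ≤ k ∧ t = l1 (x - z)}

/-- The support of a vector, as a finite set of indices. -/
noncomputable def vsupp {N : ℕ} (v : Fin N → ℂ) : Finset (Fin N) :=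
  Finset.univ.filter fun i => v i ≠ 0

noncomputable def toE {N : ℕ} (v : Fin N → ℂ) : EuclideanSpace ℂ (Fin N) :=
  (WithLp.equiv 2 (Fin N → ℂ)).symm v

variable {N : ℕ}

lemma toE_apply (v : Fin N → ℂ) (i : Fin N) : toE v i = v i := rfl
lemma toE_add (u v : Fin N → ℂ) : toE (u + v) = toE u + toE v := rfl
lemma toE_sub (u v : Fin N → ℂ) : toE (u - v) = toE u - toE v := rfl
lemma toE_smul (c : ℂ) (v : Fin N → ℂ) : toE (c • v) = c • toE v := rfl
lemma toE_zero : toE (0 : Fin N → ℂ) = 0 := rfl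

lemma l2_eq (v : Fin N → ℂ) : l2 v = ‖toE v‖ := by
  rw [EuclideanSpace.norm_eq]; rfl

lemma l2_nonneg (v : Fin N → ℂ) : 0 ≤ l2 v := Real.sqrt_nonneg _

lemma l2_sq (v : Fin N → ℂ) : l2 v ^ 2 = ∑ i, ‖v i‖ ^ 2 := by
  rw [l2, Real.sq_sqrt]; positivity

lemma l2_neg (v : Fin N → ℂ) : l2 (-v) = l2 v := by
  rw [l2_eq, l2_eq]; exact norm_neg _

lemma l2_sub_comm (u v : Fin N → ℂ) : l2 (u - v) = l2 (v - u) := by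
  rw [← l2_neg (u - v)]; ring_nf

lemma l2_add_le (u v : Fin N → ℂ) : l2 (u + v) ≤ l2 u + l2 v := by
  rw [l2_eq, l2_eq, l2_eq, toE_add]; exact norm_add_le _ _

lemma inner_toE (u v : Fin N → ℂ) :
    (inner ℂ (toE u) (toE v) : ℂ) = ∑ i, (starRingEnd ℂ) (u i) * v i := by
  rw [PiLp.inner_apply]; simp only [RCLike.inner_apply']; rfl

/-- restriction of a vector to a finite index set -/
noncomputable def restr (S : Finset (Fin N)) (v : Fin N → ℂ) : Fin N → ℂ :=
  fun i => if i ∈ S then v i else 0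

lemma restr_apply (S : Finset (Fin N)) (v : Fin N → ℂ) (i : Fin N) :
    restr S v i = if i ∈ S then v i else 0 := rfl

lemma restr_eq_zero (S : Finset (Fin N)) (v : Fin N → ℂ) {i : Fin N} (h : i ∉ S) :
    restr S v i = 0 := if_neg h

lemma restr_sub (S : Finset (Fin N)) (u v : Fin N → ℂ) :
    restr S (u - v) = restr S u - restr S v := by
  funext i; simp only [restr, Pi.sub_apply]; split <;> simp

lemma l0_le_of_support {S : Finset (Fin N)} {v : Fin N → ℂ}
    (h : ∀ i ∉ S, v i = 0) : l0 v ≤ S.card := by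
  apply Finset.card_le_card
  intro i hi
  simp only [l0, mem_filter, mem_univ, true_and] at hi
  by_contra hiS
  exact hi (h i hiS)

lemma l0_restr_le (S : Finset (Fin N)) (v : Fin N → ℂ) : l0 (restr S v) ≤ S.card :=
  l0_le_of_support fun i hi => restr_eq_zero S v hi

lemma vsupp_card (v : Fin N → ℂ) : (vsupp v).card = l0 v := rfl

lemma not_mem_vsupp {v : Fin N → ℂ} {i : Fin N} (h : i ∉ vsupp v) : v i = 0 := by
  simp only [vsupp, mem_filter, mem_univ, true_and, not_not] at h; exact h

lemma l2_sq_restr (S : Finset (Fin N)) (v : Fin N → ℂ) :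
    l2 (restr S v) ^ 2 = ∑ i ∈ S, ‖v i‖ ^ 2 := by
  rw [l2_sq]
  rw [← Finset.sum_filter_add_sum_filter_not univ (fun i => i ∈ S)]
  have h1 : ∑ i ∈ univ.filter (fun i => i ∈ S), ‖restr S v i‖ ^ 2 = ∑ i ∈ S, ‖v i‖ ^ 2 := by
    rw [Finset.filter_mem_eq_inter, Finset.univ_inter]
    exact Finset.sum_congr rfl fun i hi => by rw [restr_apply, if_pos hi]
  have h2 : ∑ i ∈ univ.filter (fun i => ¬ i ∈ S), ‖restr S v i‖ ^ 2 = 0 := by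
    apply Finset.sum_eq_zero; intro i hi
    simp only [mem_filter] at hi
    rw [restr_eq_zero _ _ hi.2]; simp
  rw [h1, h2, add_zero]

lemma l2_restr_mono {S S' : Finset (Fin N)} (h : S ⊆ S') (v : Fin N → ℂ) :
    l2 (restr S v) ≤ l2 (restr S' v) := by
  have h1 := l2_sq_restr S v
  have h2 := l2_sq_restr S' v
  have : l2 (restr S v) ^ 2 ≤ l2 (restr S' v) ^ 2 := by
    rw [h1, h2]; exact Finset.sum_le_sum_of_subset_of_nonneg h (by intros; positivity)
  have h3 := l2_nonneg (restr S v); have h4 := l2_nonneg (restr S' v)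
  nlinarith

lemma l2_restr_le (S : Finset (Fin N)) (v : Fin N → ℂ) : l2 (restr S v) ≤ l2 v := by
  have h1 := l2_sq_restr S v
  have h2 := l2_sq v
  have : l2 (restr S v) ^ 2 ≤ l2 v ^ 2 := by
    rw [h1, h2]
    exact Finset.sum_le_sum_of_subset_of_nonneg (Finset.subset_univ S) (by intros; positivity)
  have h3 := l2_nonneg (restr S v); have h4 := l2_nonneg v
  nlinarith

/-- Pythagoras splitting over S and its complement -/
lemma l2_sq_split (S : Finset (Fin N)) (v : Fin N → ℂ) :
    l2 v ^ 2 = l2 (restr S v) ^ 2 + l2 (restr Sᶜ v) ^ 2 := by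
  rw [l2_sq, l2_sq_restr, l2_sq_restr]
  rw [← Finset.sum_add_sum_compl S]

lemma l2_sq_union {S S' : Finset (Fin N)} (h : Disjoint S S') (v : Fin N → ℂ) :
    l2 (restr (S ∪ S') v) ^ 2 = l2 (restr S v) ^ 2 + l2 (restr S' v) ^ 2 := by
  rw [l2_sq_restr, l2_sq_restr, l2_sq_restr]
  exact Finset.sum_union h

lemma restr_congr_of_eqOn {S : Finset (Fin N)} {u v : Fin N → ℂ}
    (h : ∀ i ∈ S, u i = v i) : restr S u = restr S v := by
  funext i; simp only [restr]; split
  · exact h i (by assumption)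
  · rfl

-- inner with restriction
lemma inner_restr (S : Finset (Fin N)) (u v : Fin N → ℂ) :
    (inner ℂ (toE (restr S u)) (toE v) : ℂ) = inner ℂ (toE (restr S u)) (toE (restr S v)) := by
  rw [inner_toE, inner_toE]
  apply Finset.sum_congr rfl
  intro i _
  by_cases h : i ∈ S
  · simp [restr, h]
  · simp [restr, h]

lemma re_inner_restr_self (S : Finset (Fin N)) (v : Fin N → ℂ) :
    RCLike.re (inner ℂ (toE (restr S v)) (toE v) : ℂ) = l2 (restr S v) ^ 2 := by
  rw [inner_restr, inner_self_eq_norm_sq, l2_eq]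

-- adjoint identity
lemma inner_mulVec_left (A : Matrix (Fin N) (Fin N) ℂ) (u w : Fin N → ℂ) :
    (inner ℂ (toE (A.mulVec u)) (toE w) : ℂ) =
      inner ℂ (toE u) (toE (A.conjTranspose.mulVec w)) := by
  rw [inner_toE, inner_toE]
  simp only [Matrix.mulVec, dotProduct, Matrix.conjTranspose_apply, map_sum, map_mul,
    Finset.sum_mul, Finset.mul_sum]
  rw [Finset.sum_comm]
  apply Finset.sum_congr rfl; intro i _
  apply Finset.sum_congr rfl; intro j _
  rw [show star (A j i) = (starRingEnd ℂ) (A j i) from rfl]; ring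

/-- RIP property -/
def RIP {N : ℕ} (A : Matrix (Fin N) (Fin N) ℂ) (δ : ℝ) (m : ℕ) : Prop :=
  ∀ z : Fin N → ℂ, l0 z ≤ m →
    (1 - δ) * l2 z ^ 2 ≤ l2 (A.mulVec z) ^ 2 ∧ l2 (A.mulVec z) ^ 2 ≤ (1 + δ) * l2 z ^ 2

lemma l2_smul (c : ℂ) (v : Fin N → ℂ) : l2 (c • v) = ‖c‖ * l2 v := by
  rw [l2_eq, l2_eq, toE_smul, norm_smul]

lemma l2_eq_zero_iff {v : Fin N → ℂ} : l2 v = 0 ↔ v = 0 := by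
  rw [l2_eq, norm_eq_zero]
  constructor
  · intro h; funext i; exact congrFun (congrArg (fun (x : EuclideanSpace ℂ (Fin N)) => (x : Fin N → ℂ)) h) i
  · intro h; subst h; rfl

lemma RIP.normA_le {A : Matrix (Fin N) (Fin N) ℂ} {δ : ℝ} {m : ℕ}
    (h : RIP A δ m) (hδ : 0 ≤ δ) {z : Fin N → ℂ} (hz : l0 z ≤ m) :
    l2 (A.mulVec z) ≤ Real.sqrt (1 + δ) * l2 z := by
  have h2 := (h z hz).2
  have hs : Real.sqrt (1 + δ) ^ 2 = 1 + δ := Real.sq_sqrt (by linarith)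
  nlinarith [l2_nonneg (A.mulVec z), l2_nonneg z, Real.sqrt_nonneg (1 + δ),
    mul_nonneg (Real.sqrt_nonneg (1 + δ)) (l2_nonneg z)]

/-- the RIP bilinear form -/
noncomputable def Bf {N : ℕ} (A : Matrix (Fin N) (Fin N) ℂ) (u v : Fin N → ℂ) : ℂ :=
  inner ℂ (toE u) (toE v) - inner ℂ (toE (A.mulVec u)) (toE (A.mulVec v))

lemma Bf_self_re {A : Matrix (Fin N) (Fin N) ℂ} {δ : ℝ} {m : ℕ}
    (h : RIP A δ m) {z : Fin N → ℂ} (hz : l0 z ≤ m) :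
    RCLike.re (Bf A z z) ≤ δ * l2 z ^ 2 ∧ -(δ * l2 z ^ 2) ≤ RCLike.re (Bf A z z) := by
  have h1 := (h z hz).1
  have h2 := (h z hz).2
  have e1 : RCLike.re (Bf A z z) = l2 z ^ 2 - l2 (A.mulVec z) ^ 2 := by
    rw [Bf, map_sub, inner_self_eq_norm_sq, inner_self_eq_norm_sq, l2_eq, l2_eq]
  rw [e1]
  constructor <;> nlinarith [l2_nonneg z]

lemma Bf_smul_left (A : Matrix (Fin N) (Fin N) ℂ) (c : ℂ) (u v : Fin N → ℂ) :
    Bf A (c • u) v = (starRingEnd ℂ) c * Bf A u v := by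
  rw [Bf, Bf, toE_smul, Matrix.mulVec_smul, toE_smul, inner_smul_left, inner_smul_left]
  ring

lemma Bf_conj_symm (A : Matrix (Fin N) (Fin N) ℂ) (u v : Fin N → ℂ) :
    Bf A v u = (starRingEnd ℂ) (Bf A u v) := by
  rw [Bf, Bf, map_sub, inner_conj_symm, inner_conj_symm]

lemma Bf_expand (A : Matrix (Fin N) (Fin N) ℂ) (u v : Fin N → ℂ) :
    Bf A (u + v) (u + v) - Bf A (u - v) (u - v) = 2 * (Bf A u v + Bf A v u) := by
  simp only [Bf, toE_add, toE_sub, Matrix.mulVec_add, Matrix.mulVec_sub, toE_add, toE_sub,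
    inner_add_add_self, inner_sub_sub_self]
  ring

lemma re_bil {A : Matrix (Fin N) (Fin N) ℂ} {δ : ℝ} {m : ℕ}
    (h : RIP A δ m) (hδ : 0 ≤ δ) {U : Finset (Fin N)} (hU : U.card ≤ m)
    {u v : Fin N → ℂ} (hu : ∀ i ∉ U, u i = 0) (hv : ∀ i ∉ U, v i = 0) :
    RCLike.re (Bf A u v) ≤ δ * l2 u * l2 v := by
  -- half-bound for vectors supported in U
  have half : ∀ u' v' : Fin N → ℂ, (∀ i ∉ U, u' i = 0) → (∀ i ∉ U, v' i = 0) →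
      RCLike.re (Bf A u' v') ≤ δ / 2 * (l2 u' ^ 2 + l2 v' ^ 2) := by
    intro u' v' hu' hv'
    have hsum : ∀ w : Fin N → ℂ, (∀ i ∉ U, w i = 0) → l0 w ≤ m :=
      fun w hw => le_trans (l0_le_of_support hw) hU
    have hps : (∀ i ∉ U, (u' + v') i = 0) := by
      intro i hi; simp [hu' i hi, hv' i hi]
    have hms : (∀ i ∉ U, (u' - v') i = 0) := by
      intro i hi; simp [hu' i hi, hv' i hi]
    have b1 := (Bf_self_re h (hsum _ hps)).1
    have b2 := (Bf_self_re h (hsum _ hms)).2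
    have key := Bf_expand A u' v'
    have conj_eq := Bf_conj_symm A u' v'
    have re_eq : RCLike.re (Bf A (u' + v') (u' + v')) - RCLike.re (Bf A (u' - v') (u' - v'))
        = 4 * RCLike.re (Bf A u' v') := by
      have : RCLike.re (Bf A (u' + v') (u' + v') - Bf A (u' - v') (u' - v'))
          = RCLike.re (2 * (Bf A u' v' + Bf A v' u')) := by rw [key]
      rw [map_sub] at this
      rw [this, conj_eq]
      simp [Complex.add_re, Complex.mul_re]
      ring
    -- parallelogram
    have par : l2 (u' + v') ^ 2 + l2 (u' - v') ^ 2 = 2 * (l2 u' ^ 2 + l2 v' ^ 2) := by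
      rw [l2_eq, l2_eq, l2_eq, l2_eq, toE_add, toE_sub]
      have := parallelogram_law_with_norm ℂ (toE u') (toE v')
      nlinarith [this]
    nlinarith [b1, b2, re_eq, par]
  -- degenerate cases
  by_cases hu0 : l2 u = 0
  · have : u = 0 := l2_eq_zero_iff.mp hu0
    subst this
    simp [Bf, toE_zero, Matrix.mulVec_zero, hu0]
  by_cases hv0 : l2 v = 0
  · have : v = 0 := l2_eq_zero_iff.mp hv0
    subst this
    simp [Bf, toE_zero, Matrix.mulVec_zero, hv0]
  · have hu' : 0 < l2 u := lt_of_le_of_ne (l2_nonneg u) (Ne.symm hu0)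
    have hv' : 0 < l2 v := lt_of_le_of_ne (l2_nonneg v) (Ne.symm hv0)
    set a : ℝ := Real.sqrt (l2 v / l2 u) with ha
    have ha0 : 0 < a := Real.sqrt_pos.mpr (div_pos hv' hu')
    have ha2 : a ^ 2 = l2 v / l2 u := Real.sq_sqrt (le_of_lt (div_pos hv' hu'))
    have hU1 : ∀ i ∉ U, ((a : ℂ) • u) i = 0 := by
      intro i hi; simp [hu i hi]
    have hU2 : ∀ i ∉ U, (((a⁻¹ : ℝ) : ℂ) • v) i = 0 := by
      intro i hi; simp [hv i hi]
    have hb := half ((a : ℂ) • u) (((a⁻¹ : ℝ) : ℂ) • v) hU1 hU2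
    have e1 : Bf A ((a : ℂ) • u) (((a⁻¹ : ℝ) : ℂ) • v) = Bf A u v := by
      rw [Bf_smul_left]
      have : Bf A u (((a⁻¹ : ℝ) : ℂ) • v) = ((a⁻¹ : ℝ) : ℂ) * Bf A u v := by
        rw [Bf, Bf, toE_smul, Matrix.mulVec_smul, toE_smul, inner_smul_right, inner_smul_right]
        ring
      rw [this]
      have hconj : (starRingEnd ℂ) ((a : ℝ) : ℂ) = ((a : ℝ) : ℂ) := Complex.conj_ofReal a
      rw [hconj]
      have : ((a : ℝ) : ℂ) * (((a⁻¹ : ℝ) : ℂ) * Bf A u v) = (((a * a⁻¹ : ℝ)) : ℂ) * Bf A u v := by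
        push_cast; ring
      rw [this, mul_inv_cancel₀ (ne_of_gt ha0)]
      simp
    rw [e1] at hb
    have l2s1 : l2 ((a : ℂ) • u) = a * l2 u := by
      rw [l2_smul, Complex.norm_real, Real.norm_eq_abs, abs_of_pos ha0]
    have l2s2 : l2 (((a⁻¹ : ℝ) : ℂ) • v) = a⁻¹ * l2 v := by
      rw [l2_smul, Complex.norm_real, Real.norm_eq_abs, abs_of_pos (inv_pos.mpr ha0)]
    rw [l2s1, l2s2] at hb
    have key : a ^ 2 * l2 u ^ 2 = l2 u * l2 v := by
      rw [ha2]; field_simp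
    have key2 : a⁻¹ ^ 2 * l2 v ^ 2 = l2 u * l2 v := by
      have : a⁻¹ ^ 2 = l2 u / l2 v := by
        rw [inv_pow, ha2, inv_div]
      rw [this]; field_simp
    calc RCLike.re (Bf A u v) ≤ δ / 2 * ((a * l2 u) ^ 2 + (a⁻¹ * l2 v) ^ 2) := hb
      _ = δ / 2 * (a ^ 2 * l2 u ^ 2 + a⁻¹ ^ 2 * l2 v ^ 2) := by ring
      _ = δ * l2 u * l2 v := by rw [key, key2]; ring

/-- ‖(A* e)_S‖ ≤ √(1+δ)‖e‖ for small S -/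
lemma adjoint_restr {A : Matrix (Fin N) (Fin N) ℂ} {δ : ℝ} {m : ℕ}
    (h : RIP A δ m) (hδ : 0 ≤ δ) {S : Finset (Fin N)} (hS : S.card ≤ m) (e : Fin N → ℂ) :
    l2 (restr S (A.conjTranspose.mulVec e)) ≤ Real.sqrt (1 + δ) * l2 e := by
  set g := restr S (A.conjTranspose.mulVec e) with hg
  have hsq : l2 g ^ 2 = RCLike.re (inner ℂ (toE g) (toE (A.conjTranspose.mulVec e)) : ℂ) :=
    (re_inner_restr_self S _).symm
  have hadj : (inner ℂ (toE g) (toE (A.conjTranspose.mulVec e)) : ℂ) =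
      inner ℂ (toE (A.mulVec g)) (toE e) := (inner_mulVec_left A g e).symm
  have hle : RCLike.re (inner ℂ (toE (A.mulVec g)) (toE e) : ℂ) ≤ l2 (A.mulVec g) * l2 e := by
    calc RCLike.re (inner ℂ (toE (A.mulVec g)) (toE e) : ℂ)
        ≤ ‖(inner ℂ (toE (A.mulVec g)) (toE e) : ℂ)‖ := RCLike.re_le_norm _
      _ ≤ ‖toE (A.mulVec g)‖ * ‖toE e‖ := norm_inner_le_norm _ _
      _ = l2 (A.mulVec g) * l2 e := by rw [l2_eq, l2_eq]
  have hAg : l2 (A.mulVec g) ≤ Real.sqrt (1 + δ) * l2 g :=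
    h.normA_le hδ (le_trans (l0_restr_le S _) hS)
  have key : l2 g ^ 2 ≤ Real.sqrt (1 + δ) * l2 g * l2 e := by
    rw [hsq, hadj]
    calc RCLike.re (inner ℂ (toE (A.mulVec g)) (toE e) : ℂ) ≤ l2 (A.mulVec g) * l2 e := hle
      _ ≤ Real.sqrt (1 + δ) * l2 g * l2 e :=
          mul_le_mul_of_nonneg_right hAg (l2_nonneg e)
  by_cases h0 : l2 g = 0
  · rw [h0]; exact mul_nonneg (Real.sqrt_nonneg _) (l2_nonneg e)
  · have hpos : 0 < l2 g := lt_of_le_of_ne (l2_nonneg g) (Ne.symm h0)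
    nlinarith

/-- least squares orthogonality -/
lemma ls_orth {A : Matrix (Fin N) (Fin N) ℂ} {R : Finset (Fin N)} {b y : Fin N → ℂ}
    (hb : ∀ i ∉ R, b i = 0)
    (hmin : ∀ c : Fin N → ℂ, (∀ i ∉ R, c i = 0) → l2 (y - A.mulVec b) ≤ l2 (y - A.mulVec c))
    (hvec : Fin N → ℂ) (hh : ∀ i ∉ R, hvec i = 0) :
    (inner ℂ (toE (A.mulVec hvec)) (toE (y - A.mulVec b)) : ℂ) = 0 := by
  set Y : EuclideanSpace ℂ (Fin N) := toE (y - A.mulVec b) with hY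
  set H : EuclideanSpace ℂ (Fin N) := toE (A.mulVec hvec) with hH
  set g : ℂ := inner ℂ Y H with hgdef
  have key : ∀ t : ℂ, ‖Y‖ ^ 2 ≤ ‖Y - t • H‖ ^ 2 := by
    intro t
    have hsupp : ∀ i ∉ R, (b + t • hvec) i = 0 := by
      intro i hi; simp [hb i hi, hh i hi]
    have hmin' := hmin (b + t • hvec) hsupp
    have e1 : toE (y - A.mulVec (b + t • hvec)) = Y - t • H := by
      rw [hY, hH, ← toE_smul, ← toE_sub]
      congr 1
      rw [Matrix.mulVec_add, Matrix.mulVec_smul, sub_add_eq_sub_sub]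
    rw [l2_eq, l2_eq, e1] at hmin'
    have h0 : (0:ℝ) ≤ ‖Y‖ := norm_nonneg _
    have h1 : (0:ℝ) ≤ ‖Y - t • H‖ := norm_nonneg _
    nlinarith
  have expand : ∀ t : ℂ, ‖Y - t • H‖ ^ 2 =
      ‖Y‖ ^ 2 - 2 * RCLike.re (t * g) + ‖t‖ ^ 2 * ‖H‖ ^ 2 := by
    intro t
    have hns := @norm_sub_sq ℂ _ _ _ _ Y (t • H)
    rw [inner_smul_right, norm_smul] at hns
    rw [hns, hgdef]
    rw [mul_pow]
  have key2 : ∀ s : ℝ, 0 ≤ (-2) * s * ‖g‖ ^ 2 + s ^ 2 * ‖g‖ ^ 2 * ‖H‖ ^ 2 := by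
    intro s
    have h1 := key ((s : ℂ) * (starRingEnd ℂ) g)
    rw [expand] at h1
    have e2 : RCLike.re (((s : ℂ) * (starRingEnd ℂ) g) * g) = s * ‖g‖ ^ 2 := by
      rw [mul_assoc]
      have : (starRingEnd ℂ) g * g = ((‖g‖ ^ 2 : ℝ) : ℂ) := by
        rw [Complex.conj_mul']
        norm_cast
      rw [this]
      have e4 : ((s:ℂ) * ((‖g‖^2 : ℝ) : ℂ)) = (((s * ‖g‖^2 : ℝ)) : ℂ) := by push_cast; ring
      rw [e4]
      exact Complex.ofReal_re _
    have e3 : ‖(s : ℂ) * (starRingEnd ℂ) g‖ ^ 2 = s ^ 2 * ‖g‖ ^ 2 := by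
      rw [norm_mul, mul_pow, Complex.norm_real, RCLike.norm_conj]
      rw [Real.norm_eq_abs, sq_abs]
    rw [e2, e3] at h1
    nlinarith
  have hg0 : g = 0 := by
    by_contra hne
    have hgpos : 0 < ‖g‖ ^ 2 := pow_pos (norm_pos_iff.mpr hne) 2
    have hs : (0:ℝ) < 1 / (‖H‖ ^ 2 + 1) := by positivity
    have := key2 (1 / (‖H‖ ^ 2 + 1))
    have hH2 : (0:ℝ) ≤ ‖H‖ ^ 2 := by positivity
    have hlt : (1 / (‖H‖ ^ 2 + 1)) * ‖H‖ ^ 2 < 2 := by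
      rw [div_mul_eq_mul_div, one_mul, div_lt_iff₀ (by positivity)]
      nlinarith
    have e5 : (-2) * (1 / (‖H‖ ^ 2 + 1)) * ‖g‖ ^ 2 + (1 / (‖H‖ ^ 2 + 1)) ^ 2 * ‖g‖ ^ 2 * ‖H‖ ^ 2
        = (1 / (‖H‖ ^ 2 + 1)) * ‖g‖ ^ 2 * ((1 / (‖H‖ ^ 2 + 1)) * ‖H‖ ^ 2 - 2) := by ring
    have hneg : (1 / (‖H‖ ^ 2 + 1)) * ‖g‖ ^ 2 * ((1 / (‖H‖ ^ 2 + 1)) * ‖H‖ ^ 2 - 2) < 0 :=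
      mul_neg_of_pos_of_neg (mul_pos hs hgpos) (by linarith)
    linarith [this, hneg, e5]
  have : (inner ℂ H Y : ℂ) = 0 := by
    rw [← inner_conj_symm, ← hgdef, hg0, map_zero]
  exact this

/-- if S selects largest entries and |T| ≤ |S| then the T∖S mass is at most the S∖T mass -/
lemma swap_sum {v : Fin N → ℂ} {S : Finset (Fin N)}
    (hsel : ∀ i ∈ S, ∀ j ∉ S, ‖v j‖ ≤ ‖v i‖) {T : Finset (Fin N)}
    (hcard : T.card ≤ S.card) :
    l2 (restr (T \ S) v) ≤ l2 (restr (S \ T) v) := by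
  have hc : (T \ S).card ≤ (S \ T).card := by
    have h1 := Finset.card_sdiff_add_card_inter T S
    have h2 := Finset.card_sdiff_add_card_inter S T
    rw [Finset.inter_comm S T] at h2
    omega
  by_cases hTS : (T \ S) = ∅
  · rw [hTS]
    have : restr (∅ : Finset (Fin N)) v = 0 := by funext i; simp [restr]
    rw [this]
    have : l2 (0 : Fin N → ℂ) = 0 := l2_eq_zero_iff.mpr rfl
    rw [this]; exact l2_nonneg _
  · have hST : (S \ T).Nonempty := by
      rw [← Finset.card_pos]
      have := Finset.card_pos.mpr (Finset.nonempty_of_ne_empty hTS)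
      omega
    obtain ⟨j₀, hj₀, hj₀min⟩ := Finset.exists_min_image (S \ T) (fun j => ‖v j‖) hST
    have hj₀S : j₀ ∈ S := (Finset.mem_sdiff.mp hj₀).1
    have hbound : ∀ i ∈ T \ S, ‖v i‖ ≤ ‖v j₀‖ := by
      intro i hi
      exact hsel j₀ hj₀S i (Finset.mem_sdiff.mp hi).2
    have hsq1 : l2 (restr (T \ S) v) ^ 2 ≤ (T \ S).card * ‖v j₀‖ ^ 2 := by
      rw [l2_sq_restr]
      calc ∑ i ∈ T \ S, ‖v i‖ ^ 2 ≤ ∑ _i ∈ T \ S, ‖v j₀‖ ^ 2 := by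
            apply Finset.sum_le_sum
            intro i hi
            have := hbound i hi
            nlinarith [norm_nonneg (v i), norm_nonneg (v j₀)]
        _ = (T \ S).card * ‖v j₀‖ ^ 2 := by rw [Finset.sum_const, nsmul_eq_mul]
    have hsq2 : ((S \ T).card : ℝ) * ‖v j₀‖ ^ 2 ≤ l2 (restr (S \ T) v) ^ 2 := by
      rw [l2_sq_restr]
      calc ((S \ T).card : ℝ) * ‖v j₀‖ ^ 2 = ∑ _i ∈ S \ T, ‖v j₀‖ ^ 2 := by
            rw [Finset.sum_const, nsmul_eq_mul]
        _ ≤ ∑ i ∈ S \ T, ‖v i‖ ^ 2 := by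
            apply Finset.sum_le_sum
            intro i hi
            have := hj₀min i hi
            nlinarith [norm_nonneg (v i), norm_nonneg (v j₀)]
    have hmid : ((T \ S).card : ℝ) * ‖v j₀‖ ^ 2 ≤ ((S \ T).card : ℝ) * ‖v j₀‖ ^ 2 := by
      apply mul_le_mul_of_nonneg_right _ (by positivity)
      exact_mod_cast hc
    have h3 := l2_nonneg (restr (T \ S) v)
    have h4 := l2_nonneg (restr (S \ T) v)
    nlinarith

lemma add_le_sqrt2 {a b : ℝ} (ha : 0 ≤ a) (hb : 0 ≤ b) :
    a + b ≤ Real.sqrt 2 * Real.sqrt (a ^ 2 + b ^ 2) := by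
  have h2 : Real.sqrt 2 ^ 2 = 2 := Real.sq_sqrt (by norm_num)
  have hs : Real.sqrt (a ^ 2 + b ^ 2) ^ 2 = a ^ 2 + b ^ 2 := Real.sq_sqrt (by positivity)
  nlinarith [Real.sqrt_nonneg 2, Real.sqrt_nonneg (a ^ 2 + b ^ 2), sq_nonneg (a - b),
    mul_nonneg (Real.sqrt_nonneg 2) (Real.sqrt_nonneg (a ^ 2 + b ^ 2))]

lemma sqrt_shift {a b c : ℝ} (ha : 0 ≤ a) (hc : 0 ≤ c) :
    Real.sqrt ((a + c) ^ 2 + b ^ 2) ≤ Real.sqrt (a ^ 2 + b ^ 2) + c := by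
  set t := Real.sqrt (a ^ 2 + b ^ 2) with htd
  have ht0 : 0 ≤ t := Real.sqrt_nonneg _
  have ht2 : t ^ 2 = a ^ 2 + b ^ 2 := Real.sq_sqrt (by positivity)
  have hat : a ≤ t := by nlinarith [sq_nonneg b]
  have h1 : (a + c) ^ 2 + b ^ 2 ≤ (t + c) ^ 2 := by nlinarith
  calc Real.sqrt ((a + c) ^ 2 + b ^ 2) ≤ Real.sqrt ((t + c) ^ 2) := Real.sqrt_le_sqrt h1
    _ = t + c := Real.sqrt_sq (by linarith)

lemma quad_bound {d s u r ε : ℝ} (hs : s ^ 2 = 1 - d ^ 2) (hs0 : 0 < s)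
    (hd : 0 ≤ d) (hd1 : d < 1) (hu : 0 ≤ u) (hr : 0 ≤ r) (hε : 0 ≤ ε)
    (h : u ^ 2 ≤ (d * u + ε) ^ 2 + r ^ 2) : u ≤ r / s + ε / (1 - d) := by
  have hs2 : s ^ 2 = (1 - d) * (1 + d) := by rw [hs]; ring
  have hd2 : (0:ℝ) < 1 - d := by linarith
  have hh2 : (1 - d ^ 2) * u ^ 2 ≤ 2 * d * ε * u + ε ^ 2 + r ^ 2 := by nlinarith [h]
  have key : s ^ 2 * u ^ 2 - 2 * d * ε * u - r ^ 2 - ε ^ 2 ≤ 0 := by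
    rw [hs]; linarith [hh2]
  have key2 : s ^ 2 * (s ^ 2 * u ^ 2 - 2 * d * ε * u - r ^ 2 - ε ^ 2) ≤ 0 :=
    mul_nonpos_of_nonneg_of_nonpos (sq_nonneg s) key
  have hsε : s ^ 2 * ε ^ 2 = (1 - d ^ 2) * ε ^ 2 := by rw [hs]
  have hrsε : 0 ≤ r * s * ε := mul_nonneg (mul_nonneg hr hs0.le) hε
  have hA : (s ^ 2 * u - d * ε) ^ 2 ≤ (r * s + ε) ^ 2 := by nlinarith [key2, hsε, hrsε]
  have h2 : s ^ 2 * u - d * ε ≤ r * s + ε := by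
    nlinarith [hA, add_nonneg (mul_nonneg hr hs0.le) hε,
      sq_nonneg (s ^ 2 * u - d * ε + (r * s + ε))]
  have e : (r * s + (1 + d) * ε) / s ^ 2 = r / s + ε / (1 - d) := by
    have e1 : (r * s) / s ^ 2 = r / s := by
      field_simp
    have e2 : ((1 + d) * ε) / s ^ 2 = ε / (1 - d) := by
      rw [hs2, mul_comm (1 - d) (1 + d)]
      rw [mul_div_mul_left ε (1 - d) (by linarith : (1:ℝ) + d ≠ 0)]
    rw [add_div, e1, e2]
  have hle : u ≤ (r * s + (1 + d) * ε) / s ^ 2 := by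
    rw [le_div_iff₀ (by positivity)]
    nlinarith [h2]
  linarith [hle, e.le]

lemma restr_add (S : Finset (Fin N)) (u v : Fin N → ℂ) :
    restr S (u + v) = restr S u + restr S v := by
  funext i; simp only [restr, Pi.add_apply]; split <;> simp

lemma l2_restr_sub_comm (S : Finset (Fin N)) (u v : Fin N → ℂ) :
    l2 (restr S (u - v)) = l2 (restr S (v - u)) := by
  have h : restr S (u - v) = -(restr S (v - u)) := by
    funext i; simp only [restr, Pi.neg_apply, Pi.sub_apply]; split <;> ring
  rw [h, l2_neg]

lemma l2_le_of_sq_le_sq {a b : ℝ} (ha : 0 ≤ a) (hb : 0 ≤ b) (h : a ^ 2 ≤ b ^ 2) : a ≤ b := by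
  nlinarith

set_option maxHeartbeats 2000000 in
/-- The per-iteration contraction bound for CoSaMP. -/
lemma step_bound {k : ℕ} {A : Matrix (Fin N) (Fin N) ℂ} {d : ℝ}
    (hd0 : 0 ≤ d) (hd1 : d < 1)
    (hRIP : RIP A d (4 * k))
    (x e y : Fin N → ℂ) (hy : y = A.mulVec x + e)
    (T : Finset (Fin N)) (hT : T.card ≤ k) (hxT : ∀ i ∉ T, x i = 0)
    (xn : Fin N → ℂ) (hxn : l0 xn ≤ k)
    (Ω : Finset (Fin N)) (hΩ : Ω.card = 2 * k)
    (hsel : ∀ i ∈ Ω, ∀ j ∉ Ω,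
      ‖A.conjTranspose.mulVec (y - A.mulVec xn) j‖ ≤
        ‖A.conjTranspose.mulVec (y - A.mulVec xn) i‖)
    (b : Fin N → ℂ) (hbsupp : ∀ i ∉ Ω ∪ vsupp xn, b i = 0)
    (hbmin : ∀ c : Fin N → ℂ, (∀ i ∉ Ω ∪ vsupp xn, c i = 0) →
      l2 (y - A.mulVec b) ≤ l2 (y - A.mulVec c))
    (S : Finset (Fin N)) (hScard : S.card = k)
    (hSsel : ∀ i ∈ S, ∀ j ∉ S, ‖b j‖ ≤ ‖b i‖)
    (xnext : Fin N → ℂ) (hxnext : xnext = fun i => if i ∈ S then b i else 0) :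
    l2 (xnext - x) ≤ (Real.sqrt 2 * d * Real.sqrt (4 * d ^ 2 / (1 - d ^ 2) + 1)) * l2 (xn - x)
      + (Real.sqrt (1 + d) *
          (Real.sqrt 2 * Real.sqrt (4 * d ^ 2 / (1 - d ^ 2) + 1) + 2 * d / (1 - d) + 2)) * l2 e := by
  have hd2 : (0:ℝ) < 1 - d ^ 2 := by nlinarith
  set s : ℝ := Real.sqrt (1 - d ^ 2) with hsdef
  have hs : s ^ 2 = 1 - d ^ 2 := Real.sq_sqrt hd2.le
  have hs0 : 0 < s := Real.sqrt_pos.mpr hd2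
  set R : Finset (Fin N) := Ω ∪ vsupp xn with hRdef
  have hRcard : R.card ≤ 3 * k := by
    calc R.card ≤ Ω.card + (vsupp xn).card := Finset.card_union_le _ _
      _ ≤ 2 * k + k := by rw [hΩ, vsupp_card]; omega
      _ = 3 * k := by omega
  set v : Fin N → ℂ := x - xn with hvdef
  set Sv : Finset (Fin N) := T ∪ vsupp xn with hSvdef
  have hSvcard : Sv.card ≤ 2 * k := by
    calc Sv.card ≤ T.card + (vsupp xn).card := Finset.card_union_le _ _
      _ ≤ k + k := by rw [vsupp_card]; omega
      _ = 2 * k := by omega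
  have hvsupp : ∀ i ∉ Sv, v i = 0 := by
    intro i hi
    rw [Finset.mem_union] at hi
    push_neg at hi
    have h1 : x i = 0 := hxT i hi.1
    have h2 : xn i = 0 := not_mem_vsupp hi.2
    simp [hvdef, h1, h2]
  have hxnsupp : ∀ i ∉ vsupp xn, xn i = 0 := fun i hi => not_mem_vsupp hi
  set z : Fin N → ℂ := A.conjTranspose.mulVec (y - A.mulVec xn) with hzdef
  set ε : ℝ := Real.sqrt (1 + d) * l2 e with hεdef
  have hε0 : 0 ≤ ε := mul_nonneg (Real.sqrt_nonneg _) (l2_nonneg e)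
  set r : ℝ := l2 (restr Rᶜ x) with hrdef
  have hr0 : 0 ≤ r := l2_nonneg _
  set u : ℝ := l2 (x - b) with hudef
  have hu0 : 0 ≤ u := l2_nonneg _
  set p : ℝ := l2 (restr R (x - b)) with hpdef
  have hp0 : 0 ≤ p := l2_nonneg _
  set lv : ℝ := l2 v with hlvdef
  have hlv0 : 0 ≤ lv := l2_nonneg _
  -- (0) y - A xn = A v + e
  have hyAxn : y - A.mulVec xn = A.mulVec v + e := by
    rw [hy, hvdef, Matrix.mulVec_sub]
    funext i; simp; ring
  -- ============ (1) identification:  r ≤ √2 (d lv + ε)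
  have hU4 : (Sv ∪ Ω).card ≤ 4 * k := by
    calc (Sv ∪ Ω).card ≤ Sv.card + Ω.card := Finset.card_union_le _ _
      _ ≤ 2 * k + 2 * k := by omega
      _ = 4 * k := by omega
  have hident : r ≤ Real.sqrt 2 * (d * lv + ε) := by
    -- r = l2 (restr Rᶜ v)
    have e1 : restr Rᶜ x = restr Rᶜ v := by
      apply restr_congr_of_eqOn
      intro i hi
      rw [Finset.mem_compl, hRdef, Finset.mem_union] at hi
      push_neg at hi
      have : xn i = 0 := not_mem_vsupp hi.2
      simp [hvdef, this]
    have e2 : l2 (restr Rᶜ v) ≤ l2 (restr Ωᶜ v) := by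
      apply l2_restr_mono
      intro i hi
      rw [Finset.mem_compl] at *
      intro hiΩ
      exact hi (Finset.mem_union_left _ hiΩ)
    have e3 : restr Ωᶜ v = restr (Sv \ Ω) v := by
      funext i
      by_cases hiΩ : i ∈ Ω
      · rw [restr_eq_zero _ _ (by simpa using hiΩ), restr_eq_zero _ _ (by simp [hiΩ])]
      · by_cases hiSv : i ∈ Sv
        · rw [restr_apply, restr_apply, if_pos (by simpa using hiΩ),
            if_pos (Finset.mem_sdiff.mpr ⟨hiSv, hiΩ⟩)]
        · rw [restr_apply, restr_apply]
          have hv0 : v i = 0 := hvsupp i hiSv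
          split <;> split <;> simp [hv0]
    have e4 : restr (Sv \ Ω) v = restr (Sv \ Ω) (v - z) + restr (Sv \ Ω) z := by
      rw [← restr_add]; congr 1; funext i; simp
    have e5 : l2 (restr (Sv \ Ω) v) ≤ l2 (restr (Sv \ Ω) (v - z)) + l2 (restr (Sv \ Ω) z) := by
      rw [e4]; exact l2_add_le _ _
    have e6 : l2 (restr (Sv \ Ω) z) ≤ l2 (restr (Ω \ Sv) z) :=
      swap_sum hsel (by omega)
    have e7 : restr (Ω \ Sv) z = restr (Ω \ Sv) (z - v) := by
      apply restr_congr_of_eqOn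
      intro i hi
      have : v i = 0 := hvsupp i (Finset.mem_sdiff.mp hi).2
      simp [this]
    have e8 : l2 (restr (Ω \ Sv) (z - v)) = l2 (restr (Ω \ Sv) (v - z)) :=
      l2_restr_sub_comm _ _ _
    -- combine pieces with √2
    have hdisj : Disjoint (Sv \ Ω) (Ω \ Sv) := by
      apply Finset.disjoint_left.mpr
      intro i hi1 hi2
      exact (Finset.mem_sdiff.mp hi1).2 (Finset.mem_sdiff.mp hi2).1
    have e9 : l2 (restr (Sv \ Ω) (v - z)) + l2 (restr (Ω \ Sv) (v - z)) ≤
        Real.sqrt 2 * l2 (restr ((Sv \ Ω) ∪ (Ω \ Sv)) (v - z)) := by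
      have hab := add_le_sqrt2 (l2_nonneg (restr (Sv \ Ω) (v - z)))
        (l2_nonneg (restr (Ω \ Sv) (v - z)))
      have : l2 (restr (Sv \ Ω) (v - z)) ^ 2 + l2 (restr (Ω \ Sv) (v - z)) ^ 2 =
          l2 (restr ((Sv \ Ω) ∪ (Ω \ Sv)) (v - z)) ^ 2 := (l2_sq_union hdisj _).symm
      rw [this] at hab
      rwa [Real.sqrt_sq (l2_nonneg _)] at hab
    have e10 : l2 (restr ((Sv \ Ω) ∪ (Ω \ Sv)) (v - z)) ≤ l2 (restr (Sv ∪ Ω) (v - z)) := by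
      apply l2_restr_mono
      intro i hi
      rcases Finset.mem_union.mp hi with h | h
      · exact Finset.mem_union_left _ (Finset.mem_sdiff.mp h).1
      · exact Finset.mem_union_right _ (Finset.mem_sdiff.mp h).1
    -- now bound l2 (restr U (v - z))
    have hz_eq : z = A.conjTranspose.mulVec (A.mulVec v) + A.conjTranspose.mulVec e := by
      rw [hzdef, hyAxn, Matrix.mulVec_add]
    have e11 : restr (Sv ∪ Ω) (v - z) =
        restr (Sv ∪ Ω) (v - A.conjTranspose.mulVec (A.mulVec v))
          - restr (Sv ∪ Ω) (A.conjTranspose.mulVec e) := by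
      rw [← restr_sub]; congr 1; rw [hz_eq]; funext i; simp; ring
    have e12 : l2 (restr (Sv ∪ Ω) (v - z)) ≤
        l2 (restr (Sv ∪ Ω) (v - A.conjTranspose.mulVec (A.mulVec v)))
          + l2 (restr (Sv ∪ Ω) (A.conjTranspose.mulVec e)) := by
      rw [e11]
      have := l2_add_le (restr (Sv ∪ Ω) (v - A.conjTranspose.mulVec (A.mulVec v)))
        (-(restr (Sv ∪ Ω) (A.conjTranspose.mulVec e)))
      rw [l2_neg] at this
      simpa [sub_eq_add_neg] using this
    have e13 : l2 (restr (Sv ∪ Ω) (A.conjTranspose.mulVec e)) ≤ ε := by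
      rw [hεdef]
      exact adjoint_restr hRIP hd0 hU4 e
    have e14 : l2 (restr (Sv ∪ Ω) (v - A.conjTranspose.mulVec (A.mulVec v))) ≤ d * lv := by
      set g : Fin N → ℂ := restr (Sv ∪ Ω) (v - A.conjTranspose.mulVec (A.mulVec v)) with hgdef
      have hg0 : 0 ≤ l2 g := l2_nonneg g
      have hsq : l2 g ^ 2 = RCLike.re
          (inner ℂ (toE g) (toE (v - A.conjTranspose.mulVec (A.mulVec v))) : ℂ) :=
        (re_inner_restr_self _ _).symm
      have hinner : (inner ℂ (toE g) (toE (v - A.conjTranspose.mulVec (A.mulVec v))) : ℂ) =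
          Bf A g v := by
        rw [toE_sub, inner_sub_right, Bf]
        congr 1
        exact (inner_mulVec_left A g (A.mulVec v)).symm
      have hre : RCLike.re (Bf A g v) ≤ d * l2 g * lv := by
        apply re_bil hRIP hd0 hU4
        · intro i hi; exact restr_eq_zero _ _ hi
        · intro i hi
          exact hvsupp i (fun hmem => hi (Finset.mem_union_left _ hmem))
      have : l2 g ^ 2 ≤ d * l2 g * lv := by rw [hsq, hinner]; exact hre
      by_cases h0 : l2 g = 0
      · rw [h0]; positivity
      · have hpos : 0 < l2 g := lt_of_le_of_ne hg0 (Ne.symm h0)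
        nlinarith
    calc r = l2 (restr Rᶜ v) := by rw [hrdef, e1]
      _ ≤ l2 (restr Ωᶜ v) := e2
      _ = l2 (restr (Sv \ Ω) v) := by rw [e3]
      _ ≤ l2 (restr (Sv \ Ω) (v - z)) + l2 (restr (Sv \ Ω) z) := e5
      _ ≤ l2 (restr (Sv \ Ω) (v - z)) + l2 (restr (Ω \ Sv) z) := by linarith [e6]
      _ = l2 (restr (Sv \ Ω) (v - z)) + l2 (restr (Ω \ Sv) (v - z)) := by rw [e7, e8]
      _ ≤ Real.sqrt 2 * l2 (restr ((Sv \ Ω) ∪ (Ω \ Sv)) (v - z)) := e9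
      _ ≤ Real.sqrt 2 * l2 (restr (Sv ∪ Ω) (v - z)) := by
          apply mul_le_mul_of_nonneg_left e10 (Real.sqrt_nonneg 2)
      _ ≤ Real.sqrt 2 * (d * lv + ε) := by
          apply mul_le_mul_of_nonneg_left _ (Real.sqrt_nonneg 2)
          calc l2 (restr (Sv ∪ Ω) (v - z)) ≤
              l2 (restr (Sv ∪ Ω) (v - A.conjTranspose.mulVec (A.mulVec v)))
                + l2 (restr (Sv ∪ Ω) (A.conjTranspose.mulVec e)) := e12
            _ ≤ d * lv + ε := add_le_add e14 e13
  -- ============ (2) estimation: p ≤ d u + ε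
  have hW4 : (T ∪ R).card ≤ 4 * k := by
    calc (T ∪ R).card ≤ T.card + R.card := Finset.card_union_le _ _
      _ ≤ k + 3 * k := by omega
      _ = 4 * k := by omega
  have hest : p ≤ d * u + ε := by
    set g : Fin N → ℂ := restr R (x - b) with hgdef
    have hsq : p ^ 2 = RCLike.re (inner ℂ (toE g) (toE (x - b)) : ℂ) :=
      (re_inner_restr_self _ _).symm
    have hAxb : A.mulVec (x - b) = (y - A.mulVec b) - e := by
      rw [Matrix.mulVec_sub, hy]; funext i; simp; ring
    have horth : (inner ℂ (toE (A.mulVec g)) (toE (y - A.mulVec b)) : ℂ) = 0 := by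
      apply ls_orth hbsupp hbmin
      intro i hi; exact restr_eq_zero _ _ hi
    have hsplit : (inner ℂ (toE g) (toE (x - b)) : ℂ) =
        Bf A g (x - b) + inner ℂ (toE (A.mulVec g)) (toE (A.mulVec (x - b))) := by
      rw [Bf]; ring
    have hsecond : (inner ℂ (toE (A.mulVec g)) (toE (A.mulVec (x - b))) : ℂ) =
        - inner ℂ (toE (A.mulVec g)) (toE e) := by
      rw [hAxb, toE_sub, inner_sub_right, horth]
      ring
    have hre1 : RCLike.re (Bf A g (x - b)) ≤ d * p * u := by
      have hb1 := re_bil hRIP hd0 hW4 (u := g) (v := x - b)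
        (fun i hi => restr_eq_zero _ _ (fun hmem => hi (Finset.mem_union_right _ hmem)))
        (fun i hi => by
          rw [Finset.mem_union] at hi
          push_neg at hi
          have h1 : x i = 0 := hxT i hi.1
          have h2 : b i = 0 := hbsupp i hi.2
          simp [h1, h2])
      calc RCLike.re (Bf A g (x - b)) ≤ d * l2 g * l2 (x - b) := hb1
        _ = d * p * u := by rw [hgdef, ← hpdef, ← hudef]
    have hre2 : -(RCLike.re (inner ℂ (toE (A.mulVec g)) (toE e) : ℂ)) ≤
        Real.sqrt (1 + d) * p * l2 e := by
      have h1 : |RCLike.re (inner ℂ (toE (A.mulVec g)) (toE e) : ℂ)| ≤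
          ‖(inner ℂ (toE (A.mulVec g)) (toE e) : ℂ)‖ := RCLike.abs_re_le_norm _
      have h2 : ‖(inner ℂ (toE (A.mulVec g)) (toE e) : ℂ)‖ ≤ l2 (A.mulVec g) * l2 e := by
        rw [l2_eq, l2_eq]; exact norm_inner_le_norm _ _
      have h3 : l2 (A.mulVec g) ≤ Real.sqrt (1 + d) * l2 g :=
        hRIP.normA_le hd0 (le_trans (l0_restr_le R _) (by omega))
      have h4 : l2 g = p := by rw [hgdef, ← hpdef]
      have h5 := abs_nonneg (RCLike.re (inner ℂ (toE (A.mulVec g)) (toE e) : ℂ))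
      have h6 := l2_nonneg e
      nlinarith [neg_abs_le (RCLike.re (inner ℂ (toE (A.mulVec g)) (toE e) : ℂ))]
    have hkey : p ^ 2 ≤ d * p * u + Real.sqrt (1 + d) * p * l2 e := by
      rw [hsq, hsplit, map_add]
      have : RCLike.re ((inner ℂ (toE (A.mulVec g)) (toE (A.mulVec (x - b))) : ℂ)) =
          -(RCLike.re (inner ℂ (toE (A.mulVec g)) (toE e) : ℂ)) := by
        rw [hsecond, map_neg]
      rw [this]
      exact add_le_add hre1 hre2
    by_cases h0 : p = 0
    · rw [h0]
      have := mul_nonneg (Real.sqrt_nonneg (1 + d)) (l2_nonneg e)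
      rw [hεdef]
      nlinarith [mul_nonneg hd0 hu0]
    · have hppos : 0 < p := lt_of_le_of_ne hp0 (Ne.symm h0)
      rw [hεdef]
      nlinarith [hkey]
  -- ============ (3) pythagoras: u² = p² + r²
  have hpyth : u ^ 2 = p ^ 2 + r ^ 2 := by
    have h1 : u ^ 2 = l2 (restr R (x - b)) ^ 2 + l2 (restr Rᶜ (x - b)) ^ 2 := by
      rw [hudef]; exact l2_sq_split R (x - b)
    have h2 : restr Rᶜ (x - b) = restr Rᶜ x := by
      apply restr_congr_of_eqOn
      intro i hi
      rw [Finset.mem_compl] at hi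
      have : b i = 0 := hbsupp i hi
      simp [this]
    rw [h1, h2, ← hpdef, ← hrdef]
  -- ============ (4) u ≤ r/s + ε/(1-d)
  have huBound : u ≤ r / s + ε / (1 - d) := by
    apply quad_bound hs hs0 hd0 hd1 hu0 hr0 hε0
    rw [hpyth]
    have : p ^ 2 ≤ (d * u + ε) ^ 2 := by
      have hrhs : 0 ≤ d * u + ε := by positivity
      nlinarith [hest]
    linarith
  -- ============ (5) pruning: l2 (xnext - b) ≤ p
  have hwb : l2 (xnext - b) ≤ p := by
    have hxb : xnext - b = -(restr Sᶜ b) := by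
      funext i
      rw [hxnext]
      by_cases hiS : i ∈ S
      · simp [restr, hiS]
      · simp [restr, hiS]
    have h1 : l2 (xnext - b) = l2 (restr Sᶜ b) := by rw [hxb, l2_neg]
    have hcup : Sᶜ = (T \ S) ∪ (Sᶜ ∩ Tᶜ) := by
      ext i
      simp only [Finset.mem_compl, Finset.mem_union, Finset.mem_sdiff, Finset.mem_inter]
      tauto
    have hdisj2 : Disjoint (T \ S) (Sᶜ ∩ Tᶜ) := by
      apply Finset.disjoint_left.mpr
      intro i hi1 hi2
      exact (Finset.mem_compl.mp (Finset.mem_inter.mp hi2).2) (Finset.mem_sdiff.mp hi1).1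
    have hcup' : restr Sᶜ b = restr ((T \ S) ∪ (Sᶜ ∩ Tᶜ)) b := by rw [← hcup]
    have h2 : l2 (restr Sᶜ b) ^ 2 = l2 (restr (T \ S) b) ^ 2 + l2 (restr (Sᶜ ∩ Tᶜ) b) ^ 2 := by
      rw [hcup', l2_sq_union hdisj2]
    have h3 : l2 (restr (T \ S) b) ≤ l2 (restr (S \ T) b) :=
      swap_sum hSsel (by omega)
    -- pass to b - x and collect into R
    have h4 : restr (S \ T) b = restr (S \ T) (b - x) := by
      apply restr_congr_of_eqOn
      intro i hi
      have : x i = 0 := hxT i (Finset.mem_sdiff.mp hi).2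
      simp [this]
    have h5 : restr (Sᶜ ∩ Tᶜ) b = restr (Sᶜ ∩ Tᶜ) (b - x) := by
      apply restr_congr_of_eqOn
      intro i hi
      have : x i = 0 := hxT i (Finset.mem_compl.mp (Finset.mem_inter.mp hi).2)
      simp [this]
    have hdisj3 : Disjoint (S \ T) (Sᶜ ∩ Tᶜ) := by
      apply Finset.disjoint_left.mpr
      intro i hi1 hi2
      exact (Finset.mem_compl.mp (Finset.mem_inter.mp hi2).1) (Finset.mem_sdiff.mp hi1).1
    have h6 : l2 (restr ((S \ T) ∪ (Sᶜ ∩ Tᶜ)) (b - x)) ^ 2 =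
        l2 (restr (S \ T) (b - x)) ^ 2 + l2 (restr (Sᶜ ∩ Tᶜ) (b - x)) ^ 2 :=
      l2_sq_union hdisj3 _
    -- restr V (b-x) = restr (V ∩ R) (b-x)
    have h7 : restr ((S \ T) ∪ (Sᶜ ∩ Tᶜ)) (b - x) =
        restr (((S \ T) ∪ (Sᶜ ∩ Tᶜ)) ∩ R) (b - x) := by
      funext i
      by_cases hiV : i ∈ (S \ T) ∪ (Sᶜ ∩ Tᶜ)
      · by_cases hiR : i ∈ R
        · rw [restr_apply, restr_apply, if_pos hiV, if_pos (Finset.mem_inter.mpr ⟨hiV, hiR⟩)]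
        · have hb0 : b i = 0 := hbsupp i hiR
          have hx0 : x i = 0 := by
            apply hxT
            rcases Finset.mem_union.mp hiV with hh | hh
            · exact (Finset.mem_sdiff.mp hh).2
            · exact Finset.mem_compl.mp (Finset.mem_inter.mp hh).2
          rw [restr_apply, restr_apply, if_pos hiV,
            if_neg (fun hmem => hiR (Finset.mem_inter.mp hmem).2)]
          simp [hb0, hx0]
      · rw [restr_eq_zero _ _ hiV,
          restr_eq_zero _ _ (fun hmem => hiV (Finset.mem_inter.mp hmem).1)]
    have h8 : l2 (restr (((S \ T) ∪ (Sᶜ ∩ Tᶜ)) ∩ R) (b - x)) ≤ l2 (restr R (b - x)) :=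
      l2_restr_mono (Finset.inter_subset_right) _
    have h9 : l2 (restr R (b - x)) = p := by
      rw [hpdef]; exact l2_restr_sub_comm R b x
    have h10 : l2 (restr (S \ T) (b - x)) ^ 2 + l2 (restr (Sᶜ ∩ Tᶜ) (b - x)) ^ 2 ≤ p ^ 2 := by
      rw [← h6, h7]
      have := l2_restr_mono (Finset.inter_subset_right :
        ((S \ T) ∪ (Sᶜ ∩ Tᶜ)) ∩ R ⊆ R) (b - x)
      rw [h9] at this
      nlinarith [l2_nonneg (restr (((S \ T) ∪ (Sᶜ ∩ Tᶜ)) ∩ R) (b - x)), hp0]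
    rw [h1]
    have h3' : l2 (restr (T \ S) b) ^ 2 ≤ l2 (restr (S \ T) (b - x)) ^ 2 := by
      rw [← h4]
      nlinarith [h3, l2_nonneg (restr (T \ S) b), l2_nonneg (restr (S \ T) b)]
    have e3 : l2 (restr (Sᶜ ∩ Tᶜ) b) ^ 2 = l2 (restr (Sᶜ ∩ Tᶜ) (b - x)) ^ 2 := by rw [h5]
    have hfin : l2 (restr Sᶜ b) ^ 2 ≤ p ^ 2 := by linarith [h2, h10, h3', e3]
    exact l2_le_of_sq_le_sq (l2_nonneg _) hp0 hfin
  -- ============ (6) E'² ≤ (2p)² + r²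
  have h9 : l2 (restr R (b - x)) = p := by
    rw [hpdef]; exact l2_restr_sub_comm R b x
  have hsplit6 : l2 (xnext - x) ^ 2 =
      l2 (restr R (xnext - x)) ^ 2 + l2 (restr Rᶜ (xnext - x)) ^ 2 := l2_sq_split R _
  have h2nd : l2 (restr Rᶜ (xnext - x)) = r := by
    have hxe : restr Rᶜ (xnext - x) = -(restr Rᶜ x) := by
      funext i
      by_cases hiR : i ∈ Rᶜ
      · have hb0 : b i = 0 := hbsupp i (Finset.mem_compl.mp hiR)
        have hx0 : xnext i = 0 := by rw [hxnext]; simp [hb0]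
        simp [restr, hiR, hx0]
      · simp [restr, hiR]
    rw [hxe, l2_neg, hrdef]
  have hfirst : l2 (restr R (xnext - x)) ≤ 2 * p := by
    have hxx : restr R (xnext - x) = restr R (xnext - b) + restr R (b - x) := by
      rw [← restr_add]; congr 1; funext i; simp
    calc l2 (restr R (xnext - x)) = l2 (restr R (xnext - b) + restr R (b - x)) := by rw [hxx]
      _ ≤ l2 (restr R (xnext - b)) + l2 (restr R (b - x)) := l2_add_le _ _
      _ ≤ l2 (xnext - b) + p := by
          have := l2_restr_le R (xnext - b)
          rw [h9]
          linarith
      _ ≤ 2 * p := by linarith [hwb]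
  have hE6 : l2 (xnext - x) ^ 2 ≤ (2 * p) ^ 2 + r ^ 2 := by
    rw [hsplit6, h2nd]
    nlinarith [hfirst, l2_nonneg (restr R (xnext - x))]
  have hE : l2 (xnext - x) ≤ Real.sqrt ((2 * p) ^ 2 + r ^ 2) := by
    apply l2_le_of_sq_le_sq (l2_nonneg _) (Real.sqrt_nonneg _)
    rw [Real.sq_sqrt (by positivity)]
    exact hE6
  -- ============ (7) chain of sqrt bounds
  have hca : Real.sqrt ((2 * p) ^ 2 + r ^ 2) ≤ Real.sqrt ((2 * d * u + 2 * ε) ^ 2 + r ^ 2) := by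
    apply Real.sqrt_le_sqrt
    have h2p : 2 * p ≤ 2 * d * u + 2 * ε := by linarith [hest]
    nlinarith [hp0]
  have hcb : Real.sqrt ((2 * d * u + 2 * ε) ^ 2 + r ^ 2) ≤
      Real.sqrt ((2 * d * u) ^ 2 + r ^ 2) + 2 * ε := by
    exact sqrt_shift (by positivity) (by positivity)
  have hcc : Real.sqrt ((2 * d * u) ^ 2 + r ^ 2) ≤
      Real.sqrt ((2 * d * (r / s) + 2 * d * (ε / (1 - d))) ^ 2 + r ^ 2) := by
    apply Real.sqrt_le_sqrt
    have hub : 2 * d * u ≤ 2 * d * (r / s) + 2 * d * (ε / (1 - d)) := by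
      have := mul_le_mul_of_nonneg_left huBound (by linarith : (0:ℝ) ≤ 2 * d)
      linarith [this]
    nlinarith [mul_nonneg (mul_nonneg (by norm_num : (0:ℝ) ≤ 2) hd0) hu0]
  have hcd : Real.sqrt ((2 * d * (r / s) + 2 * d * (ε / (1 - d))) ^ 2 + r ^ 2) ≤
      Real.sqrt ((2 * d * (r / s)) ^ 2 + r ^ 2) + 2 * d * (ε / (1 - d)) := by
    apply sqrt_shift
    · positivity
    · have : 0 ≤ ε / (1 - d) := div_nonneg hε0 (by linarith)
      positivity
  have hce : Real.sqrt ((2 * d * (r / s)) ^ 2 + r ^ 2) =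
      r * Real.sqrt (4 * d ^ 2 / (1 - d ^ 2) + 1) := by
    have e1 : (2 * d * (r / s)) ^ 2 + r ^ 2 = r ^ 2 * (4 * d ^ 2 / (1 - d ^ 2) + 1) := by
      rw [← hs]
      field_simp
      ring
    rw [e1, Real.sqrt_mul (sq_nonneg r), Real.sqrt_sq hr0]
  set Q : ℝ := Real.sqrt (4 * d ^ 2 / (1 - d ^ 2) + 1) with hQdef
  have hQ0 : 0 ≤ Q := Real.sqrt_nonneg _
  have hcf : r * Q ≤ Real.sqrt 2 * (d * lv + ε) * Q :=
    mul_le_mul_of_nonneg_right hident hQ0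
  have hfinal : l2 (xnext - x) ≤
      Real.sqrt 2 * (d * lv + ε) * Q + 2 * d * (ε / (1 - d)) + 2 * ε := by
    calc l2 (xnext - x) ≤ Real.sqrt ((2 * p) ^ 2 + r ^ 2) := hE
      _ ≤ Real.sqrt ((2 * d * u + 2 * ε) ^ 2 + r ^ 2) := hca
      _ ≤ Real.sqrt ((2 * d * u) ^ 2 + r ^ 2) + 2 * ε := hcb
      _ ≤ Real.sqrt ((2 * d * (r / s) + 2 * d * (ε / (1 - d))) ^ 2 + r ^ 2) + 2 * ε := by
          linarith [hcc]
      _ ≤ Real.sqrt ((2 * d * (r / s)) ^ 2 + r ^ 2) + 2 * d * (ε / (1 - d)) + 2 * ε := by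
          linarith [hcd]
      _ = r * Q + 2 * d * (ε / (1 - d)) + 2 * ε := by rw [hce]
      _ ≤ Real.sqrt 2 * (d * lv + ε) * Q + 2 * d * (ε / (1 - d)) + 2 * ε := by
          linarith [hcf]
  have hlveq : lv = l2 (xn - x) := by rw [hlvdef, hvdef]; exact l2_sub_comm x xn
  have hrhs : Real.sqrt 2 * (d * lv + ε) * Q + 2 * d * (ε / (1 - d)) + 2 * ε =
      (Real.sqrt 2 * d * Q) * lv +
        (Real.sqrt (1 + d) * (Real.sqrt 2 * Q + 2 * d / (1 - d) + 2)) * l2 e := by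
    rw [hεdef]; ring
  rw [← hlveq]
  linarith [hfinal, hrhs.le]


set_option maxHeartbeats 1000000 in
/-- Performance guarantee of CoSaMP: if the 4k-th restricted isometry constant
of A is at most δ < 0.47, then there are constants 0 < ρ < 1 and τ > 0,
depending only on δ, such that every sequence of k-sparse iterates produced by
the CoSaMP iteration for (A, y, k) with y = A xhat + β satisfies
‖xhatⁿ − xhat_{h(k)}‖₂ ≤ ρⁿ ‖xhat⁰ − xhat_{h(k)}‖₂ + τ ‖A xhat_{t(k)} + β‖₂ for all n. -/
theorem cosamp_bound
    (N k : ℕ) (hN : 0 < N) (hk : 0 < k) (δ : ℝ) (hδ0 : 0 ≤ δ) (hδ : δ < 0.47) :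
    ∃ ρ τ : ℝ, 0 < ρ ∧ ρ < 1 ∧ 0 < τ ∧
      ∀ (A : Matrix (Fin N) (Fin N) ℂ),
        -- δ_{4k}(A) ≤ δ, i.e. A satisfies the RIP of order 4k with constant δ
        (∀ z : Fin N → ℂ, l0 z ≤ 4 * k →
          (1 - δ) * l2 z ^ 2 ≤ l2 (A.mulVec z) ^ 2 ∧
            l2 (A.mulVec z) ^ 2 ≤ (1 + δ) * l2 z ^ 2) →
        ∀ (xhat β y : Fin N → ℂ), y = A.mulVec xhat + β →
          ∀ xseq : ℕ → Fin N → ℂ,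
            -- each iterate is k-sparse
            (∀ n, l0 (xseq n) ≤ k) →
            -- each iterate is produced from the previous one by the CoSaMP steps
            (∀ n, ∃ (Ω : Finset (Fin N)) (b : Fin N → ℂ),
              -- (i)–(ii) identification: Ω consists of 2k indices of largest-modulus
              -- entries of the signal proxy z = A*(y − A xhatⁿ)
              Ω.card = 2 * k ∧
              (∀ i ∈ Ω, ∀ j ∉ Ω,
                ‖A.conjTranspose.mulVec (y - A.mulVec (xseq n)) j‖ ≤
                  ‖A.conjTranspose.mulVec (y - A.mulVec (xseq n)) i‖) ∧
              -- (iii)–(iv) support merger and least-squares estimation on R = Ω ∪ supp(xhatⁿ)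
              (∀ i ∉ Ω ∪ vsupp (xseq n), b i = 0) ∧
              (∀ c : Fin N → ℂ, (∀ i ∉ Ω ∪ vsupp (xseq n), c i = 0) →
                l2 (y - A.mulVec b) ≤ l2 (y - A.mulVec c)) ∧
              -- (v) pruning: xhat^{n+1} keeps the k largest-modulus entries of b
              (∃ S : Finset (Fin N), S.card = k ∧
                (∀ i ∈ S, ∀ j ∉ S, ‖b j‖ ≤ ‖b i‖) ∧
                xseq (n + 1) = fun i => if i ∈ S then b i else 0)) →
            -- xhat_{h(k)}: a k-sparse vector keeping the k largest-modulus entries of xhat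
            ∀ T : Finset (Fin N), T.card = k →
              (∀ i ∈ T, ∀ j ∉ T, ‖xhat j‖ ≤ ‖xhat i‖) →
              ∀ xh : Fin N → ℂ, xh = (fun i => if i ∈ T then xhat i else 0) →
                ∀ n : ℕ,
                  l2 (xseq n - xh) ≤
                    ρ ^ n * l2 (xseq 0 - xh) + τ * l2 (A.mulVec (xhat - xh) + β) := by
  have hd0 : (0:ℝ) ≤ 0.47 := by norm_num
  have hd1 : (0.47:ℝ) < 1 := by norm_num
  have hden : (0:ℝ) < 1 - (0.47:ℝ) ^ 2 := by norm_num
  set Q : ℝ := Real.sqrt (4 * (0.47:ℝ) ^ 2 / (1 - (0.47:ℝ) ^ 2) + 1) with hQdef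
  have hQarg : (0:ℝ) < 4 * (0.47:ℝ) ^ 2 / (1 - (0.47:ℝ) ^ 2) + 1 := by positivity
  have hQ0 : 0 < Q := Real.sqrt_pos.mpr hQarg
  have hQ2 : Q ^ 2 = 4 * (0.47:ℝ) ^ 2 / (1 - (0.47:ℝ) ^ 2) + 1 := Real.sq_sqrt hQarg.le
  set ρ : ℝ := Real.sqrt 2 * 0.47 * Q with hρdef
  set C : ℝ := Real.sqrt (1 + 0.47) * (Real.sqrt 2 * Q + 2 * 0.47 / (1 - 0.47) + 2) with hCdef
  have hs2 : Real.sqrt 2 ^ 2 = 2 := Real.sq_sqrt (by norm_num)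
  have hρ0 : 0 < ρ := by
    apply mul_pos (mul_pos (Real.sqrt_pos.mpr (by norm_num)) (by norm_num)) hQ0
  have hρsq : ρ ^ 2 = 2 * (0.47:ℝ) ^ 2 * (4 * (0.47:ℝ) ^ 2 / (1 - (0.47:ℝ) ^ 2) + 1) := by
    rw [hρdef, mul_pow, mul_pow, hs2, hQ2]
  have hρ1 : ρ < 1 := by
    have hlt : ρ ^ 2 < 1 := by rw [hρsq]; norm_num
    nlinarith [hρ0]
  have hC0 : 0 < C := by
    apply mul_pos (Real.sqrt_pos.mpr (by norm_num))
    have h1 : 0 ≤ Real.sqrt 2 * Q := mul_nonneg (Real.sqrt_nonneg 2) hQ0.le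
    have h2 : (0:ℝ) ≤ 2 * 0.47 / (1 - 0.47) := by norm_num
    linarith
  have h1ρ : 0 < 1 - ρ := by linarith
  refine ⟨ρ, C / (1 - ρ), hρ0, hρ1, div_pos hC0 h1ρ, ?_⟩
  intro A hRIPδ xhat β y hy xseq hsparse hiter T hT hTsel xh hxh n
  -- upgrade RIP from δ to 0.47
  have hRIP : RIP A 0.47 (4 * k) := by
    intro z hz
    obtain ⟨h1, h2⟩ := hRIPδ z hz
    have hl2 : (0:ℝ) ≤ l2 z ^ 2 := sq_nonneg _
    constructor
    · calc (1 - 0.47) * l2 z ^ 2 ≤ (1 - δ) * l2 z ^ 2 := by nlinarith [hδ.le]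
        _ ≤ l2 (A.mulVec z) ^ 2 := h1
    · calc l2 (A.mulVec z) ^ 2 ≤ (1 + δ) * l2 z ^ 2 := h2
        _ ≤ (1 + 0.47) * l2 z ^ 2 := by nlinarith [hδ.le]
  set e : Fin N → ℂ := A.mulVec (xhat - xh) + β with hedef
  have hy' : y = A.mulVec xh + e := by
    rw [hy, hedef, Matrix.mulVec_sub]
    funext i; simp only [Pi.add_apply, Pi.sub_apply]; ring
  have hxT : ∀ i ∉ T, xh i = 0 := by
    intro i hi; rw [hxh]; simp [hi]
  have hstep : ∀ m : ℕ, l2 (xseq (m + 1) - xh) ≤ ρ * l2 (xseq m - xh) + C * l2 e := by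
    intro m
    obtain ⟨Ω, b, hΩ, hsel, hbsupp, hbmin, S, hScard, hSsel, hxnext⟩ := hiter m
    have := step_bound hd0 hd1 hRIP xh e y hy' T hT.le hxT (xseq m) (hsparse m)
      Ω hΩ hsel b hbsupp hbmin S hScard hSsel (xseq (m + 1)) hxnext
    rw [hρdef, hCdef, hQdef]
    exact this
  -- induction
  induction n with
  | zero =>
      have h0 : (0:ℝ) ≤ C / (1 - ρ) * l2 e :=
        mul_nonneg (div_pos hC0 h1ρ).le (l2_nonneg e)
      simp only [pow_zero, one_mul]
      linarith [h0]
  | succ m ih =>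
      have hτρ : ρ * (C / (1 - ρ)) + C = C / (1 - ρ) := by
        field_simp
        ring
      have hm := hstep m
      have hEn0 : 0 ≤ l2 (xseq 0 - xh) := l2_nonneg _
      have hLe0 : 0 ≤ l2 e := l2_nonneg _
      calc l2 (xseq (m + 1) - xh) ≤ ρ * l2 (xseq m - xh) + C * l2 e := hm
        _ ≤ ρ * (ρ ^ m * l2 (xseq 0 - xh) + C / (1 - ρ) * l2 e) + C * l2 e := by
            apply add_le_add_left
            exact mul_le_mul_of_nonneg_left ih hρ0.le
        _ = ρ ^ (m + 1) * l2 (xseq 0 - xh) + (ρ * (C / (1 - ρ)) + C) * l2 e := by ring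
        _ = ρ ^ (m + 1) * l2 (xseq 0 - xh) + C / (1 - ρ) * l2 e := by rw [hτρ]
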